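/- arXiv:1102.1460 — 2 statements merged into one kernel-verified Lean document; each statement's English description precedes it below -/
import Mathlib

section
/- Contraction Principle: For 1 ≤ p < ∞, real numbers a_1,…,a_n, independent symmetric ±1 random variables (Rademacher functions) r_1,…,r_n, and vectors x_1,…,x_n in a Banach space E, one has (∫ ‖∑_{k≤n} a_k r_k(ω) x_k‖^p dP)^{1/p} ≤ (max_{k≤n} |a_k|) · (∫ ‖∑_{k≤n} r_k(ω) x_k‖^p dP)^{1/p}. -/
open Filter MeasureTheory Topology

noncomputable def rademacher (j : ℕ) (t : ℝ) : ℝ := (-1 : ℝ) ^ ⌊t * 2 ^ (j + 1)⌋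

noncomputable def radSum {F : Type*} [NormedAddCommGroup F] [NormedSpace ℝ F]
    (x : ℕ → F) (m : ℕ) (t : ℝ) : F :=
  ∑ j ∈ Finset.range m, rademacher j t • x j

/-- Membership in `Rad(F)`: the partial sums of `∑ rⱼ(·) xⱼ` converge in `L₂([0,1];F)`. -/
def RadMem {F : Type*} [NormedAddCommGroup F] [NormedSpace ℝ F] (x : ℕ → F) : Prop :=
  ∃ S : ℝ → F,
    Tendsto (fun m => ∫ t in (0:ℝ)..1, ‖radSum x m t - S t‖ ^ 2) atTop (nhds 0)

/-- The `Rad(F)` norm: `(∫₀¹ ‖∑_{j=1}^∞ rⱼ(t) xⱼ‖² dt)^{1/2}`, as the limit of the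
corresponding quantities for the partial sums. -/
noncomputable def RadNorm {F : Type*} [NormedAddCommGroup F] [NormedSpace ℝ F]
    (x : ℕ → F) : ℝ :=
  limUnder atTop (fun m => (∫ t in (0:ℝ)..1, ‖radSum x m t‖ ^ 2) ^ ((1:ℝ)/2))

/-- The weak-`p` norm of the first `m` terms of a sequence. -/
noncomputable def weakNormFin {E : Type*} [NormedAddCommGroup E] [NormedSpace ℝ E]
    (p : ℝ) (x : ℕ → E) (m : ℕ) : ℝ :=
  ⨆ φ : {φ : E →L[ℝ] ℝ // ‖φ‖ ≤ 1},
    (∑ j ∈ Finset.range m, |φ.1 (x j)| ^ p) ^ (1/p)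

/-- The weak-`p` norm of a sequence. -/
noncomputable def weakNorm {E : Type*} [NormedAddCommGroup E] [NormedSpace ℝ E]
    (p : ℝ) (x : ℕ → E) : ℝ :=
  ⨆ φ : {φ : E →L[ℝ] ℝ // ‖φ‖ ≤ 1}, (∑' j, |φ.1 (x j)| ^ p) ^ (1/p)

/-- Membership in `ℓ_p^u(E)`: weakly `p`-summable with tails tending to zero in weak-`p` norm. -/
def MemLpU {E : Type*} [NormedAddCommGroup E] [NormedSpace ℝ E]
    (p : ℝ) (x : ℕ → E) : Prop :=
  (∀ φ : E →L[ℝ] ℝ, Summable fun j => |φ (x j)| ^ p) ∧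
    Tendsto (fun m => weakNorm p fun j => x (j + m)) atTop (nhds 0)

/-- `T` is almost `(p,…,p)`-summing at the point `a`. -/
def AlmostSummingAt {n : ℕ} {E : Fin n → Type*} [∀ i, NormedAddCommGroup (E i)]
    [∀ i, NormedSpace ℝ (E i)] {F : Type*} [NormedAddCommGroup F] [NormedSpace ℝ F]
    (p : ℝ) (T : ContinuousMultilinearMap ℝ E F) (a : ∀ i, E i) : Prop :=
  ∀ x : ∀ i, ℕ → E i, (∀ i, MemLpU p (x i)) →
    RadMem (fun j => T (fun i => a i + x i j) - T a)

/-- `T` is everywhere almost `(p,…,p)`-summing. -/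
def EvAlmostSumming {n : ℕ} {E : Fin n → Type*} [∀ i, NormedAddCommGroup (E i)]
    [∀ i, NormedSpace ℝ (E i)] {F : Type*} [NormedAddCommGroup F] [NormedSpace ℝ F]
    (p : ℝ) (T : ContinuousMultilinearMap ℝ E F) : Prop :=
  ∀ a : ∀ i, E i, AlmostSummingAt p T a

/-- The norm `‖T‖_{al,p}^{ev}`: the best constant in the finite characterization. -/
noncomputable def evNorm {n : ℕ} {E : Fin n → Type*} [∀ i, NormedAddCommGroup (E i)]
    [∀ i, NormedSpace ℝ (E i)] {F : Type*} [NormedAddCommGroup F] [NormedSpace ℝ F]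
    (p : ℝ) (T : ContinuousMultilinearMap ℝ E F) : ℝ :=
  sInf {C : ℝ | 0 ≤ C ∧ ∀ (m : ℕ) (a : ∀ i, E i) (x : ∀ i, ℕ → E i),
    (∫ t in (0:ℝ)..1,
        ‖radSum (fun j => T (fun i => a i + x i j) - T a) m t‖ ^ 2) ^ ((1:ℝ)/2)
      ≤ C * ∏ i, (‖a i‖ + weakNormFin p (x i) m)}

/-- A linear operator is almost `p`-summing. -/
def LinAlmostSumming {E F : Type*} [NormedAddCommGroup E] [NormedSpace ℝ E]
    [NormedAddCommGroup F] [NormedSpace ℝ F] (p : ℝ) (u : E →L[ℝ] F) : Prop :=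
  ∀ x : ℕ → E, MemLpU p x → RadMem fun j => u (x j)

/-- The almost `p`-summing norm of a linear operator. -/
noncomputable def linNorm {E F : Type*} [NormedAddCommGroup E] [NormedSpace ℝ E]
    [NormedAddCommGroup F] [NormedSpace ℝ F] (p : ℝ) (u : E →L[ℝ] F) : ℝ :=
  sInf {C : ℝ | 0 ≤ C ∧ ∀ (m : ℕ) (x : ℕ → E),
    (∫ t in (0:ℝ)..1, ‖radSum (fun j => u (x j)) m t‖ ^ 2) ^ ((1:ℝ)/2)
      ≤ C * weakNormFin p x m}


/- ### Auxiliary machinery for the contraction principle -/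

noncomputable def dsgn (n k i : ℕ) : ℝ := (-1 : ℝ) ^ (i / 2 ^ (n - 1 - k))

lemma dsgn_eq (n k i : ℕ) : dsgn n k i = if Nat.testBit i (n - 1 - k) then -1 else 1 := by
  rw [dsgn, Nat.testBit_eq_decide_div_mod_eq]
  rcases Nat.even_or_odd (i / 2 ^ (n - 1 - k)) with h | h
  · rw [h.neg_one_pow]; simp [Nat.even_iff.mp h]
  · rw [h.neg_one_pow]; simp [Nat.odd_iff.mp h]

lemma dsgn_xor (n k i M : ℕ) :
    dsgn n k (i ^^^ M) = (if Nat.testBit M (n - 1 - k) then -1 else 1) * dsgn n k i := by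
  rw [dsgn_eq, dsgn_eq, Nat.testBit_xor]
  cases hM : Nat.testBit M (n - 1 - k) <;> cases hi : Nat.testBit i (n - 1 - k) <;> simp

lemma floor_lemma {n k : ℕ} (hk : k < n) {i : ℕ} {t : ℝ}
    (ht : t ∈ Set.Ico ((i : ℝ) / 2 ^ n) (((i : ℝ) + 1) / 2 ^ n)) :
    ⌊t * 2 ^ (k + 1)⌋ = (i / 2 ^ (n - 1 - k) : ℕ) := by
  set m := n - 1 - k with hm
  have hnm : n = (k + 1) + m := by omega
  set q := i / 2 ^ m with hq
  have h1 : q * 2 ^ m ≤ i := Nat.div_mul_le_self i (2 ^ m)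
  have h2 : i + 1 ≤ (q + 1) * 2 ^ m := by
    have hmod := Nat.div_add_mod i (2 ^ m)
    rw [← hq] at hmod
    have hlt := Nat.mod_lt i (show 0 < 2 ^ m by positivity)
    have hring : (q + 1) * 2 ^ m = 2 ^ m * q + 2 ^ m := by ring
    linarith [hmod, hlt, hring]
  have h1' : (q : ℝ) * 2 ^ m ≤ i := by exact_mod_cast h1
  have h2' : (i : ℝ) + 1 ≤ ((q : ℝ) + 1) * 2 ^ m := by exact_mod_cast h2
  obtain ⟨hl, hr⟩ := ht
  have hpm : (0:ℝ) < 2 ^ m := by positivity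
  have hpn : (0:ℝ) < 2 ^ n := by positivity
  have hil : (i : ℝ) ≤ t * 2 ^ n := by rwa [div_le_iff₀ hpn] at hl
  have hir : t * 2 ^ n < (i : ℝ) + 1 := by rwa [lt_div_iff₀ hpn] at hr
  have hpow : t * 2 ^ n = (t * 2 ^ (k + 1)) * 2 ^ m := by rw [hnm, pow_add]; ring
  rw [hpow] at hil hir
  rw [Int.floor_eq_iff]
  constructor
  · push_cast; nlinarith
  · push_cast; nlinarith

lemma rademacher_eq {n k : ℕ} (hk : k < n) {i : ℕ} {t : ℝ}
    (ht : t ∈ Set.Ico ((i : ℝ) / 2 ^ n) (((i : ℝ) + 1) / 2 ^ n)) :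
    rademacher k t = dsgn n k i := by
  rw [rademacher, floor_lemma hk ht, dsgn, zpow_natCast]

lemma dyadic_ae (n : ℕ) (f : ℝ → ℝ) (c : ℕ → ℝ)
    (h : ∀ i : ℕ, i < 2 ^ n → ∀ t ∈ Set.Ico ((i : ℝ) / 2 ^ n) (((i : ℝ) + 1) / 2 ^ n), f t = c i)
    {i : ℕ} (hi : i < 2 ^ n) :
    f =ᵐ[volume.restrict (Set.Ioc ((i : ℝ) / 2 ^ n) (((i : ℝ) + 1) / 2 ^ n))] fun _ => c i := by
  have hb : (volume.restrict (Set.Ioc ((i : ℝ) / 2 ^ n) (((i : ℝ) + 1) / 2 ^ n)))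
      {((i : ℝ) + 1) / 2 ^ n} = 0 :=
    le_antisymm ((Measure.restrict_apply_le _ _).trans_eq Real.volume_singleton) bot_le
  have hne : ∀ᵐ t ∂volume.restrict (Set.Ioc ((i : ℝ) / 2 ^ n) (((i : ℝ) + 1) / 2 ^ n)),
      t ≠ ((i : ℝ) + 1) / 2 ^ n := by
    rw [ae_iff]; simpa using hb
  filter_upwards [ae_restrict_mem measurableSet_Ioc, hne] with t ht htne
  exact h i hi t ⟨ht.1.le, lt_of_le_of_ne ht.2 htne⟩

lemma dyadic_integral (n : ℕ) (f : ℝ → ℝ) (c : ℕ → ℝ)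
    (h : ∀ i : ℕ, i < 2 ^ n → ∀ t ∈ Set.Ico ((i : ℝ) / 2 ^ n) (((i : ℝ) + 1) / 2 ^ n), f t = c i) :
    ∫ t in (0 : ℝ)..1, f t = (2 ^ n : ℝ)⁻¹ * ∑ i ∈ Finset.range (2 ^ n), c i := by
  have hNpos : (0 : ℝ) < 2 ^ n := by positivity
  set a : ℕ → ℝ := fun i => (i : ℝ) / 2 ^ n with ha
  have hcast : ∀ i : ℕ, a (i + 1) = ((i : ℝ) + 1) / 2 ^ n := by
    intro i; simp only [ha]; push_cast; ring
  have hle : ∀ i : ℕ, a i ≤ a (i + 1) := by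
    intro i; rw [hcast]; simp only [ha]; gcongr; linarith
  have hint : ∀ i < 2 ^ n, IntervalIntegrable f volume (a i) (a (i + 1)) := by
    intro i hi
    rw [intervalIntegrable_iff_integrableOn_Ioc_of_le (hle i), hcast]
    have hconst : IntegrableOn (fun _ : ℝ => c i)
        (Set.Ioc ((i : ℝ) / 2 ^ n) (((i : ℝ) + 1) / 2 ^ n)) volume :=
      integrableOn_const measure_Ioc_lt_top.ne
    exact hconst.congr (dyadic_ae n f c h hi).symm
  have hsum := intervalIntegral.sum_integral_adjacent_intervals hint
  have h0 : a 0 = 0 := by simp [ha]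
  have hN1 : a (2 ^ n) = 1 := by simp only [ha]; push_cast; exact div_self hNpos.ne'
  rw [h0, hN1] at hsum
  rw [← hsum, Finset.mul_sum]
  apply Finset.sum_congr rfl
  intro i hi
  rw [Finset.mem_range] at hi
  have heq : ∫ t in a i..a (i + 1), f t = ∫ t in a i..a (i + 1), c i := by
    apply intervalIntegral.integral_congr_ae
    rw [Set.uIoc_of_le (hle i), hcast]
    simp only [ha]
    exact (ae_restrict_iff' measurableSet_Ioc).mp (dyadic_ae n f c h hi)
  rw [heq, intervalIntegral.integral_const, smul_eq_mul]
  have hlen : a (i + 1) - a i = (2 ^ n : ℝ)⁻¹ := by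
    rw [hcast]; simp only [ha]; field_simp; ring
  rw [hlen]

section G
variable {E : Type*} [NormedAddCommGroup E] [NormedSpace ℝ E]

noncomputable def Gsum (p : ℝ) {n : ℕ} (x : Fin n → E) (c : Fin n → ℝ) : ℝ :=
  ∑ i ∈ Finset.range (2 ^ n), ‖∑ k, (c k * dsgn n k.val i) • x k‖ ^ p

lemma Gsum_nonneg (p : ℝ) {n : ℕ} (x : Fin n → E) (c : Fin n → ℝ) : 0 ≤ Gsum p x c :=
  Finset.sum_nonneg fun _ _ => Real.rpow_nonneg (norm_nonneg _) p

lemma Gsum_flip (p : ℝ) {n : ℕ} (x : Fin n → E) (c : Fin n → ℝ) (k₀ : Fin n) :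
    Gsum p x (Function.update c k₀ (-(c k₀))) = Gsum p x c := by
  unfold Gsum
  set M := 2 ^ (n - 1 - k₀.val) with hM
  have hMlt : M < 2 ^ n := by
    rw [hM]; exact Nat.pow_lt_pow_right one_lt_two (by omega)
  refine Finset.sum_nbij' (fun i => i ^^^ M) (fun i => i ^^^ M) ?_ ?_ ?_ ?_ ?_
  · intro i hi
    rw [Finset.mem_range] at *
    exact Nat.xor_lt_two_pow hi hMlt
  · intro i hi
    rw [Finset.mem_range] at *
    exact Nat.xor_lt_two_pow hi hMlt
  · intro i _; rw [Nat.xor_assoc, Nat.xor_self, Nat.xor_zero]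
  · intro i _; rw [Nat.xor_assoc, Nat.xor_self, Nat.xor_zero]
  · intro i _
    congr 2
    apply Finset.sum_congr rfl
    intro k _
    rw [dsgn_xor]
    by_cases hk : k = k₀
    · subst hk
      rw [Function.update_self, hM, Nat.testBit_two_pow_self]
      simp only [if_pos trivial]
      congr 1
      ring
    · have hne : n - 1 - k₀.val ≠ n - 1 - k.val := by
        have h1 := k.isLt
        have h2 := k₀.isLt
        intro h
        exact hk (Fin.ext (by omega)).symm
      rw [Function.update_of_ne hk, hM, Nat.testBit_two_pow_of_ne hne]
      simp

lemma norm_affine_rpow_le {p : ℝ} (hp : 1 ≤ p) (v w : E) {s M : ℝ} (hM : 0 < M)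
    (hs : |s| ≤ M) :
    ‖v + s • w‖ ^ p ≤ (M + s) / (2 * M) * ‖v + M • w‖ ^ p
      + (M - s) / (2 * M) * ‖v + (-M) • w‖ ^ p := by
  set lam := (M + s) / (2 * M) with hlam
  set mu := (M - s) / (2 * M) with hmu
  rw [abs_le] at hs
  have hl0 : 0 ≤ lam := div_nonneg (by linarith) (by linarith)
  have hm0 : 0 ≤ mu := div_nonneg (by linarith) (by linarith)
  have hsum : lam + mu = 1 := by
    rw [hlam, hmu]; field_simp; ring
  have hcoef : lam * M + mu * (-M) = s := by
    rw [hlam, hmu]; field_simp; ring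
  have hdecomp : v + s • w = lam • (v + M • w) + mu • (v + (-M) • w) := by
    have : lam • (v + M • w) + mu • (v + (-M) • w)
        = (lam + mu) • v + (lam * M + mu * (-M)) • w := by module
    rw [this, hsum, hcoef, one_smul]
  have hnorm : ‖v + s • w‖ ≤ lam * ‖v + M • w‖ + mu * ‖v + (-M) • w‖ := by
    rw [hdecomp]
    refine (norm_add_le _ _).trans ?_
    rw [norm_smul, norm_smul, Real.norm_eq_abs, Real.norm_eq_abs,
      abs_of_nonneg hl0, abs_of_nonneg hm0]
  have h1 : ‖v + s • w‖ ^ p ≤ (lam * ‖v + M • w‖ + mu * ‖v + (-M) • w‖) ^ p :=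
    Real.rpow_le_rpow (norm_nonneg _) hnorm (by linarith)
  refine h1.trans ?_
  have := (convexOn_rpow hp).2 (Set.mem_Ici.mpr (norm_nonneg (v + M • w)))
    (Set.mem_Ici.mpr (norm_nonneg (v + (-M) • w))) hl0 hm0 hsum
  simpa [smul_eq_mul] using this

lemma Gsum_split (p : ℝ) {n : ℕ} (x : Fin n → E) (c : Fin n → ℝ) (k₀ : Fin n) (s : ℝ) (i : ℕ) :
    ∑ k, (Function.update c k₀ s k * dsgn n k.val i) • x k
      = (∑ k ∈ Finset.univ.erase k₀, (c k * dsgn n k.val i) • x k)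
        + s • (dsgn n k₀.val i • x k₀) := by
  rw [← Finset.add_sum_erase _ _ (Finset.mem_univ k₀), Function.update_self, smul_smul,
    add_comm]
  congr 1
  apply Finset.sum_congr rfl
  intro k hk
  rw [Function.update_of_ne (Finset.ne_of_mem_erase hk)]

lemma Gsum_coord {p : ℝ} (hp : 1 ≤ p) {n : ℕ} (x : Fin n → E) {c : Fin n → ℝ} {M : ℝ}
    (hM : 0 < M) (hc : ∀ k, |c k| ≤ M) (k₀ : Fin n) :
    Gsum p x c ≤ Gsum p x (Function.update c k₀ M) := by
  set lam := (M + c k₀) / (2 * M) with hlam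
  set mu := (M - c k₀) / (2 * M) with hmu
  have hsum : lam + mu = 1 := by rw [hlam, hmu]; field_simp; ring
  have hl0 : 0 ≤ lam := div_nonneg (by have := abs_le.mp (hc k₀); linarith) (by linarith)
  have hm0 : 0 ≤ mu := div_nonneg (by have := abs_le.mp (hc k₀); linarith) (by linarith)
  have hstep : Gsum p x c ≤ lam * Gsum p x (Function.update c k₀ M)
      + mu * Gsum p x (Function.update c k₀ (-M)) := by
    unfold Gsum
    rw [Finset.mul_sum, Finset.mul_sum, ← Finset.sum_add_distrib]
    apply Finset.sum_le_sum
    intro i _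
    have e0 := Gsum_split p x c k₀ (c k₀) i
    rw [Function.update_eq_self] at e0
    rw [e0, Gsum_split p x c k₀ M i, Gsum_split p x c k₀ (-M) i]
    exact norm_affine_rpow_le hp _ _ hM (hc k₀)
  have hflip : Gsum p x (Function.update c k₀ (-M)) = Gsum p x (Function.update c k₀ M) := by
    have h := Gsum_flip p x (Function.update c k₀ M) k₀
    rwa [Function.update_self, Function.update_idem] at h
  rw [hflip] at hstep
  calc Gsum p x c ≤ lam * Gsum p x (Function.update c k₀ M)
      + mu * Gsum p x (Function.update c k₀ M) := hstep
    _ = Gsum p x (Function.update c k₀ M) := by rw [← add_mul, hsum, one_mul]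

lemma Gsum_le_const {p : ℝ} (hp : 1 ≤ p) {n : ℕ} (x : Fin n → E) {c : Fin n → ℝ} {M : ℝ}
    (hM : 0 < M) (hc : ∀ k, |c k| ≤ M) :
    Gsum p x c ≤ Gsum p x (fun _ => M) := by
  have main : ∀ s : Finset (Fin n),
      Gsum p x c ≤ Gsum p x (fun k => if k ∈ s then M else c k) := by
    intro s
    induction s using Finset.induction_on with
    | empty => simp
    | insert k₀ s hk₀ ih =>
      refine ih.trans ?_
      have hc' : ∀ k, |(fun k => if k ∈ s then M else c k) k| ≤ M := by
        intro k; by_cases h : k ∈ s <;> simp [h, abs_of_pos hM, hc k]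
      have := Gsum_coord hp x (c := fun k => if k ∈ s then M else c k) hM hc' k₀
      refine this.trans_eq ?_
      congr 1
      funext k
      by_cases h : k = k₀
      · subst h; simp [Function.update_self]
      · rw [Function.update_of_ne h]
        by_cases h2 : k ∈ s <;> simp [h, h2]
  have := main Finset.univ
  simpa using this

lemma Gsum_const_smul (p : ℝ) {n : ℕ} (x : Fin n → E) {M : ℝ} (hM : 0 ≤ M) :
    Gsum p x (fun _ => M) = M ^ p * Gsum p x (fun _ => 1) := by
  unfold Gsum
  rw [Finset.mul_sum]
  apply Finset.sum_congr rfl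
  intro i _
  have he : ∑ k, (M * dsgn n k.val i) • x k = M • ∑ k, (1 * dsgn n k.val i) • x k := by
    rw [Finset.smul_sum]
    apply Finset.sum_congr rfl
    intro k _
    rw [smul_smul, one_mul]
  rw [he, norm_smul, Real.norm_eq_abs, abs_of_nonneg hM,
    Real.mul_rpow hM (norm_nonneg _)]

end G


theorem contraction_principle {E : Type*} [NormedAddCommGroup E] [NormedSpace ℝ E]
    [CompleteSpace E] (p : ℝ) (hp : 1 ≤ p) (n : ℕ) (a : Fin n → ℝ) (x : Fin n → E) :
    (∫ t in (0:ℝ)..1, ‖∑ k, (a k * rademacher k.val t) • x k‖ ^ p) ^ (1/p) ≤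
      (⨆ k, |a k|) *
        (∫ t in (0:ℝ)..1, ‖∑ k, rademacher k.val t • x k‖ ^ p) ^ (1/p) := by
  have hp0 : p ≠ 0 := by linarith
  have hL : (∫ t in (0:ℝ)..1, ‖∑ k, (a k * rademacher k.val t) • x k‖ ^ p)
      = (2 ^ n : ℝ)⁻¹ * Gsum p x a := by
    simp only [Gsum]
    apply dyadic_integral n _ (fun i => ‖∑ k, (a k * dsgn n k.val i) • x k‖ ^ p)
    intro i hi t ht
    congr 2
    apply Finset.sum_congr rfl
    intro k _
    rw [rademacher_eq k.isLt ht]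
  have hR : (∫ t in (0:ℝ)..1, ‖∑ k, rademacher k.val t • x k‖ ^ p)
      = (2 ^ n : ℝ)⁻¹ * Gsum p x (fun _ => 1) := by
    simp only [Gsum, one_mul]
    apply dyadic_integral n _ (fun i => ‖∑ k, dsgn n k.val i • x k‖ ^ p)
    intro i hi t ht
    congr 2
    apply Finset.sum_congr rfl
    intro k _
    rw [rademacher_eq k.isLt ht]
  rcases Nat.eq_zero_or_pos n with hn | hn
  · subst hn
    simp [Real.zero_rpow hp0, Real.zero_rpow (one_div_ne_zero hp0),
      Real.zero_rpow (inv_ne_zero hp0), Real.iSup_of_isEmpty]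
  · set M := ⨆ k, |a k| with hMdef
    have hbdd : BddAbove (Set.range fun k => |a k|) := Set.Finite.bddAbove (Set.finite_range _)
    have hMk : ∀ k, |a k| ≤ M := fun k => le_ciSup hbdd k
    have hM0 : 0 ≤ M := (abs_nonneg _).trans (hMk ⟨0, hn⟩)
    rw [hL, hR]
    rcases eq_or_lt_of_le hM0 with hMz | hMpos
    · have ha0 : ∀ k, a k = 0 := by
        intro k
        have h := hMk k
        rw [← hMz] at h
        exact abs_eq_zero.mp (le_antisymm h (abs_nonneg _))
      have hG : Gsum p x a = 0 := by
        simp only [Gsum]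
        apply Finset.sum_eq_zero
        intro i _
        simp [ha0, Real.zero_rpow hp0]
      rw [hG, mul_zero, Real.zero_rpow (one_div_ne_zero hp0)]
      exact mul_nonneg hM0 (Real.rpow_nonneg
        (mul_nonneg (by positivity) (Gsum_nonneg _ _ _)) _)
    · have key : Gsum p x a ≤ M ^ p * Gsum p x (fun _ => 1) :=
        (Gsum_le_const hp x hMpos hMk).trans_eq (Gsum_const_smul p x hM0)
      have h2n : (0:ℝ) ≤ ((2:ℝ) ^ n)⁻¹ := by positivity
      calc ((2 ^ n : ℝ)⁻¹ * Gsum p x a) ^ (1/p)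
          ≤ ((2 ^ n : ℝ)⁻¹ * (M ^ p * Gsum p x (fun _ => 1))) ^ (1/p) :=
            Real.rpow_le_rpow (mul_nonneg h2n (Gsum_nonneg p x a))
              (mul_le_mul_of_nonneg_left key h2n) (by positivity)
        _ = M * ((2 ^ n : ℝ)⁻¹ * Gsum p x (fun _ => 1)) ^ (1/p) := by
            rw [show (2 ^ n : ℝ)⁻¹ * (M ^ p * Gsum p x (fun _ => 1))
                = M ^ p * ((2 ^ n : ℝ)⁻¹ * Gsum p x (fun _ => 1)) by ring,
              Real.mul_rpow (Real.rpow_nonneg hM0 p)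
                (mul_nonneg h2n (Gsum_nonneg p x _)),
              ← Real.rpow_mul hM0, mul_one_div, div_self hp0, Real.rpow_one]
end

section
/- Let 1 < p ≤ 2 and let T : E₁ × ⋯ × Eₙ → F be a continuous n-linear operator between Banach spaces. If there exists C ≥ 0 such that for all m, all x_j^{(k)} ∈ E_k and all (a₁,…,aₙ), (∫₀¹ ‖∑_{j=1}^m r_j(t)[T(a₁+x_j^{(1)},…,aₙ+x_j^{(n)}) − T(a₁,…,aₙ)]‖² dt)^{1/2} ≤ C ∏_{k=1}^n (‖a_k‖ + ‖(x_j^{(k)})_{j=1}^m‖_{w,p}), then T is everywhere almost (p,…,p)-summing: for every point (a₁,…,aₙ) and all weakly p-summable null sequences (x_j^{(k)}) ∈ ℓ_p^u(E_k), the sequence (T(a₁+x_j^{(1)},…,aₙ+x_j^{(n)}) − T(a₁,…,aₙ))_j belongs to Rad(F). -/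
open Filter MeasureTheory Topology

section AuxRad

open Finset MeasureTheory ENNReal

variable {F : Type*} [NormedAddCommGroup F] [NormedSpace ℝ F]

lemma abs_rademacher (j : ℕ) (t : ℝ) : |rademacher j t| = 1 := by
  unfold rademacher
  rcases Int.even_or_odd ⌊t * 2 ^ (j + 1)⌋ with he | ho
  · rw [he.neg_one_zpow]; norm_num
  · rw [ho.neg_one_zpow]; norm_num

lemma measurable_rademacher (j : ℕ) : Measurable (rademacher j) := by
  unfold rademacher
  exact measurable_from_top.comp ((measurable_id.mul_const _).floor)

lemma stronglyMeasurable_radSum (z : ℕ → F) (m : ℕ) :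
    StronglyMeasurable (radSum z m) := by
  unfold radSum
  exact Finset.stronglyMeasurable_fun_sum _ fun j _ =>
    ((measurable_rademacher j).stronglyMeasurable).smul_const (z j)

lemma norm_radSum_le (z : ℕ → F) (m : ℕ) (t : ℝ) :
    ‖radSum z m t‖ ≤ ∑ j ∈ Finset.range m, ‖z j‖ :=
  (norm_sum_le _ _).trans (le_of_eq (Finset.sum_congr rfl fun j _ => by
    rw [norm_smul, Real.norm_eq_abs, abs_rademacher, one_mul]))

/-- Lebesgue measure on `(0,1]`. -/
noncomputable def radM : Measure ℝ := volume.restrict (Set.Ioc (0:ℝ) 1)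

instance : IsFiniteMeasure radM := by
  constructor
  rw [radM, Measure.restrict_apply_univ, Real.volume_Ioc]
  simp

lemma memLp_radSum (z : ℕ → F) (m : ℕ) : MemLp (radSum z m) 2 radM :=
  MemLp.of_bound (stronglyMeasurable_radSum z m).aestronglyMeasurable _
    (Filter.Eventually.of_forall (norm_radSum_le z m))

noncomputable def radLp (z : ℕ → F) (m : ℕ) : Lp F 2 radM :=
  (memLp_radSum z m).toLp _

lemma integral_radM {f : ℝ → ℝ} : (∫ t in (0:ℝ)..1, f t) = ∫ t, f t ∂radM := by
  rw [intervalIntegral.integral_of_le zero_le_one, radM]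

lemma norm_toLp_sq {f : ℝ → F} (hf : MemLp f 2 radM) :
    ‖hf.toLp f‖ = (∫ t in (0:ℝ)..1, ‖f t‖ ^ 2) ^ ((1:ℝ)/2) := by
  rw [MeasureTheory.Lp.norm_toLp f hf,
    hf.eLpNorm_eq_integral_rpow_norm two_ne_zero ENNReal.ofNat_ne_top]
  rw [ENNReal.toReal_ofReal (Real.rpow_nonneg (integral_nonneg (fun t => by positivity)) _)]
  have h2 : ((2:ℝ≥0∞)).toReal = ((2:ℕ):ℝ) := by norm_num
  rw [integral_radM]
  norm_num [h2, Real.rpow_natCast]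

lemma norm_radLp (z : ℕ → F) (m : ℕ) :
    ‖radLp z m‖ = (∫ t in (0:ℝ)..1, ‖radSum z m t‖ ^ 2) ^ ((1:ℝ)/2) :=
  norm_toLp_sq _

lemma radSum_sub_trunc (z : ℕ → F) {m m' : ℕ} (hm : m ≤ m') (t : ℝ) :
    radSum z m' t - radSum z m t = radSum (fun j => if j < m then 0 else z j) m' t := by
  unfold radSum
  rw [eq_comm]
  have hite : ∀ j, rademacher j t • (if j < m then (0:F) else z j)
      = if j < m then 0 else rademacher j t • z j := by
    intro j; split_ifs <;> simp
  simp_rw [hite]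
  rw [Finset.sum_ite, Finset.sum_const_zero, zero_add]
  rw [← Finset.sum_sdiff_eq_sub (Finset.range_subset_range.2 hm)]
  apply Finset.sum_congr _ (fun _ _ => rfl)
  ext j
  simp only [Finset.mem_filter, Finset.mem_range, Finset.mem_sdiff, not_lt]

lemma radSum_add (u v : ℕ → F) (m : ℕ) (t : ℝ) :
    radSum (fun j => u j + v j) m t = radSum u m t + radSum v m t := by
  simp [radSum, smul_add, Finset.sum_add_distrib]

lemma radLp_congr (z w : ℕ → F) (m : ℕ) (h : ∀ j, z j = w j) :
    radLp z m = radLp w m := by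
  have : z = w := funext h
  subst this; rfl

lemma radLp_sub_of_le (z : ℕ → F) {m m' : ℕ} (hm : m ≤ m') :
    radLp z m' - radLp z m = radLp (fun j => if j < m then 0 else z j) m' := by
  rw [radLp, radLp, radLp, ← MemLp.toLp_sub]
  exact MemLp.toLp_congr _ _ (Filter.Eventually.of_forall fun t => radSum_sub_trunc z hm t)

lemma radLp_sum {ι : Type*} (A : Finset ι) (z : ι → ℕ → F) (m : ℕ) :
    radLp (fun j => ∑ s ∈ A, z s j) m = ∑ s ∈ A, radLp (z s) m := by
  classical
  induction A using Finset.induction_on with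
  | empty =>
    simp only [Finset.sum_empty]
    rw [radLp]
    exact (MemLp.toLp_congr _ (MemLp.zero : MemLp (0 : ℝ → F) 2 radM) (Filter.Eventually.of_forall (fun t => by
      simp [radSum]))).trans (MemLp.toLp_zero (MemLp.zero : MemLp (0 : ℝ → F) 2 radM))
  | @insert s A hs ih =>
    simp only [Finset.sum_insert hs]
    rw [← ih, radLp, radLp, radLp, ← MemLp.toLp_add]
    exact MemLp.toLp_congr _ _ (Filter.Eventually.of_forall fun t => radSum_add _ _ m t)

end AuxRad

section AuxRad2
open MeasureTheory
variable {F : Type*} [NormedAddCommGroup F] [NormedSpace ℝ F]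
lemma coeFn_radLp (z : ℕ → F) (m : ℕ) : ⇑(radLp z m) =ᵐ[radM] radSum z m :=
  (memLp_radSum z m).coeFn_toLp
end AuxRad2
section AuxWeak

open Finset

variable {E : Type*} [NormedAddCommGroup E] [NormedSpace ℝ E] {p : ℝ}

instance instNonemptyUnitBallDual : Nonempty {φ : E →L[ℝ] ℝ // ‖φ‖ ≤ 1} :=
  ⟨⟨0, by simp⟩⟩

lemma weakNormFin_nonneg (p : ℝ) (x : ℕ → E) (m : ℕ) : 0 ≤ weakNormFin p x m :=
  Real.iSup_nonneg fun φ => Real.rpow_nonneg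
    (Finset.sum_nonneg fun j _ => Real.rpow_nonneg (abs_nonneg _) _) _

lemma weakNorm_nonneg (p : ℝ) (x : ℕ → E) : 0 ≤ weakNorm p x :=
  Real.iSup_nonneg fun φ => Real.rpow_nonneg
    (tsum_nonneg fun j => Real.rpow_nonneg (abs_nonneg _) _) _

lemma weakNormFin_zero_seq (hp : p ≠ 0) (m : ℕ) :
    weakNormFin p (fun _ : ℕ => (0:E)) m = 0 := by
  unfold weakNormFin
  have : ∀ φ : {φ : E →L[ℝ] ℝ // ‖φ‖ ≤ 1},
      (∑ j ∈ Finset.range m, |φ.1 (0:E)| ^ p) ^ (1/p) = (0:ℝ) := by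
    intro φ
    simp [Real.zero_rpow hp, Real.zero_rpow (one_div_ne_zero hp), Real.zero_rpow (inv_ne_zero hp)]
  simp only [this, ciSup_const]

/-- Uniform boundedness: a weakly `p`-summable sequence has uniformly bounded
partial weak sums over the unit ball of the dual. -/
lemma ubp (hp1 : 1 < p) (x : ℕ → E)
    (hsum : ∀ φ : E →L[ℝ] ℝ, Summable fun j => |φ (x j)| ^ p) :
    ∃ D : ℝ, ∀ φ : E →L[ℝ] ℝ, ‖φ‖ ≤ 1 → (∑' j, |φ (x j)| ^ p) ≤ D := by
  have hp0 : (0:ℝ) < p := lt_trans one_pos hp1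
  set q : ENNReal := ENNReal.ofReal p with hq
  have hqt : q.toReal = p := ENNReal.toReal_ofReal hp0.le
  have hqt0 : 0 < q.toReal := by rw [hqt]; exact hp0
  haveI : Fact (1 ≤ q) := ⟨ENNReal.one_le_ofReal.2 hp1.le⟩
  -- the truncated sequences, as elements of ℓ^q
  have hmem : ∀ (m : ℕ) (φ : E →L[ℝ] ℝ),
      Memℓp (fun j => if j < m then φ (x j) else 0) q := by
    intro m φ
    apply memℓp_gen
    apply summable_of_ne_finset_zero (s := Finset.range m)
    intro j hj
    rw [Finset.mem_range] at hj
    simp [if_neg hj, Real.zero_rpow hqt0.ne']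
  have htsum : ∀ (m : ℕ) (φ : E →L[ℝ] ℝ),
      (∑' j, ‖if j < m then φ (x j) else 0‖ ^ q.toReal)
        = ∑ j ∈ Finset.range m, |φ (x j)| ^ p := by
    intro m φ
    rw [tsum_eq_sum (s := Finset.range m) (fun j hj => by
      rw [Finset.mem_range] at hj
      simp [if_neg hj, Real.zero_rpow hqt0.ne'])]
    apply Finset.sum_congr rfl
    intro j hj
    rw [Finset.mem_range] at hj
    rw [if_pos hj, hqt, Real.norm_eq_abs]
  -- the linear maps
  have hbound : ∀ (m : ℕ) (φ : E →L[ℝ] ℝ),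
      (∑ j ∈ Finset.range m, |φ (x j)| ^ p) ^ (1/p)
        ≤ ((∑ j ∈ Finset.range m, ‖x j‖ ^ p) ^ (1/p)) * ‖φ‖ := by
    intro m φ
    have h1 : (∑ j ∈ Finset.range m, |φ (x j)| ^ p)
        ≤ (∑ j ∈ Finset.range m, ‖x j‖ ^ p) * ‖φ‖ ^ p := by
      rw [Finset.sum_mul]
      apply Finset.sum_le_sum
      intro j _
      calc |φ (x j)| ^ p ≤ (‖φ‖ * ‖x j‖) ^ p := by
            apply Real.rpow_le_rpow (abs_nonneg _) _ hp0.le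
            simpa [Real.norm_eq_abs] using φ.le_opNorm (x j)
        _ = ‖x j‖ ^ p * ‖φ‖ ^ p := by
            rw [Real.mul_rpow (norm_nonneg _) (norm_nonneg _), mul_comm]
    calc (∑ j ∈ Finset.range m, |φ (x j)| ^ p) ^ (1/p)
        ≤ ((∑ j ∈ Finset.range m, ‖x j‖ ^ p) * ‖φ‖ ^ p) ^ (1/p) := by
          apply Real.rpow_le_rpow
            (Finset.sum_nonneg fun j _ => Real.rpow_nonneg (abs_nonneg _) _) h1
            (by positivity)
      _ = ((∑ j ∈ Finset.range m, ‖x j‖ ^ p) ^ (1/p)) * ‖φ‖ := by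
          rw [Real.mul_rpow (Finset.sum_nonneg fun j _ =>
            Real.rpow_nonneg (norm_nonneg _) _) (Real.rpow_nonneg (norm_nonneg _) _),
            ← Real.rpow_mul (norm_nonneg _), mul_one_div, div_self hp0.ne', Real.rpow_one]
  let L : ℕ → (E →L[ℝ] ℝ) →L[ℝ] lp (fun _ : ℕ => ℝ) q := fun m =>
    LinearMap.mkContinuous
      { toFun := fun φ => ⟨fun j => if j < m then φ (x j) else 0, hmem m φ⟩
        map_add' := by
          intro φ ψ; ext j
          show (if j < m then (φ + ψ) (x j) else 0)
            = (if j < m then φ (x j) else 0) + (if j < m then ψ (x j) else 0)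
          by_cases hj : j < m <;> simp [hj]
        map_smul' := by
          intro c φ; ext j
          show (if j < m then (c • φ) (x j) else 0) = c • (if j < m then φ (x j) else 0)
          by_cases hj : j < m <;> simp [hj] }
      ((∑ j ∈ Finset.range m, ‖x j‖ ^ p) ^ (1/p))
      (by
        intro φ
        rw [lp.norm_eq_tsum_rpow hqt0]
        show (∑' j, ‖if j < m then φ (x j) else 0‖ ^ q.toReal) ^ (1 / q.toReal) ≤ _
        rw [htsum m φ, hqt]
        exact hbound m φ)
  have hLnorm : ∀ (m : ℕ) (φ : E →L[ℝ] ℝ),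
      ‖L m φ‖ = (∑ j ∈ Finset.range m, |φ (x j)| ^ p) ^ (1/p) := by
    intro m φ
    rw [lp.norm_eq_tsum_rpow hqt0]
    show (∑' j, ‖if j < m then φ (x j) else 0‖ ^ q.toReal) ^ (1 / q.toReal) = _
    rw [htsum m φ, hqt]
  have hpt : ∀ φ : E →L[ℝ] ℝ, ∃ Cφ, ∀ m, ‖L m φ‖ ≤ Cφ := by
    intro φ
    refine ⟨(∑' j, |φ (x j)| ^ p) ^ (1/p), fun m => ?_⟩
    rw [hLnorm m φ]
    apply Real.rpow_le_rpow
      (Finset.sum_nonneg fun j _ => Real.rpow_nonneg (abs_nonneg _) _)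
      (Summable.sum_le_tsum _ (fun j _ => Real.rpow_nonneg (abs_nonneg _) _) (hsum φ))
      (by positivity)
  obtain ⟨D', hD'⟩ := banach_steinhaus hpt
  refine ⟨(max D' 0) ^ p, fun φ hφ => ?_⟩
  apply Real.tsum_le_of_sum_range_le (fun j => Real.rpow_nonneg (abs_nonneg _) _)
  intro m
  have h1 : ‖L m φ‖ ≤ max D' 0 := by
    have h0 := (L m).le_opNorm φ
    nlinarith [norm_nonneg (L m), hD' m, le_max_left D' 0, norm_nonneg φ]
  rw [hLnorm m φ] at h1
  have h2 := Real.rpow_le_rpow (Real.rpow_nonneg (Finset.sum_nonneg fun j _ =>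
    Real.rpow_nonneg (abs_nonneg _) _) _) h1 hp0.le
  rwa [← Real.rpow_mul (Finset.sum_nonneg fun j _ => Real.rpow_nonneg (abs_nonneg _) _),
    one_div_mul_cancel hp0.ne', Real.rpow_one] at h2

end AuxWeak
section AuxWeak2

open Finset

variable {E : Type*} [NormedAddCommGroup E] [NormedSpace ℝ E] {p : ℝ}

lemma tail_tsum_le (hp1 : 1 < p) (x : ℕ → E)
    (hsum : ∀ φ : E →L[ℝ] ℝ, Summable fun j => |φ (x j)| ^ p)
    (φ : E →L[ℝ] ℝ) (m : ℕ) :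
    (∑' j, |φ (x (j + m))| ^ p) ≤ ∑' j, |φ (x j)| ^ p := by
  have h := Summable.sum_add_tsum_nat_add (f := fun j => |φ (x j)| ^ p) m (hsum φ)
  have h2 : 0 ≤ ∑ i ∈ Finset.range m, |φ (x i)| ^ p :=
    Finset.sum_nonneg fun j _ => Real.rpow_nonneg (abs_nonneg _) _
  linarith

lemma summable_tail (x : ℕ → E)
    (hsum : ∀ φ : E →L[ℝ] ℝ, Summable fun j => |φ (x j)| ^ p)
    (φ : E →L[ℝ] ℝ) (m : ℕ) : Summable fun j => |φ (x (j + m))| ^ p :=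
  ((summable_nat_add_iff m).2 (hsum φ))

lemma bddAbove_tail (hp1 : 1 < p) (x : ℕ → E)
    (hsum : ∀ φ : E →L[ℝ] ℝ, Summable fun j => |φ (x j)| ^ p) (m : ℕ) :
    BddAbove (Set.range fun φ : {φ : E →L[ℝ] ℝ // ‖φ‖ ≤ 1} =>
      (∑' j, |φ.1 (x (j + m))| ^ p) ^ (1/p)) := by
  obtain ⟨D, hD⟩ := ubp hp1 x hsum
  refine ⟨(max D 0) ^ ((1:ℝ)/p), ?_⟩
  rintro r ⟨φ, rfl⟩
  apply Real.rpow_le_rpow (tsum_nonneg fun j => Real.rpow_nonneg (abs_nonneg _) _)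
    (le_trans (tail_tsum_le hp1 x hsum φ.1 m)
      (le_trans (hD φ.1 φ.2) (le_max_left _ _)))
    (by positivity)

lemma weakNorm_shift_antitone (hp1 : 1 < p) (x : ℕ → E)
    (hsum : ∀ φ : E →L[ℝ] ℝ, Summable fun j => |φ (x j)| ^ p) :
    Antitone fun m => weakNorm p fun j => x (j + m) := by
  apply antitone_nat_of_succ_le
  intro m
  apply ciSup_le
  intro φ
  have key : (∑' j, |φ.1 (x (j + (m+1)))| ^ p) ≤ ∑' j, |φ.1 (x (j + m))| ^ p := by
    have hs := summable_tail x hsum φ.1 m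
    have h := Summable.sum_add_tsum_nat_add (f := fun j => |φ.1 (x (j + m))| ^ p) 1 hs
    have h2 : 0 ≤ ∑ i ∈ Finset.range 1, |φ.1 (x (i + m))| ^ p :=
      Finset.sum_nonneg fun j _ => Real.rpow_nonneg (abs_nonneg _) _
    have h3 : (∑' j, |φ.1 (x (j + (m+1)))| ^ p)
        = ∑' j, |φ.1 (x ((j + 1) + m))| ^ p := by
      congr 1; funext j; rw [show j + (m+1) = j+1+m by omega]
    linarith [h3 ▸ h]
  calc (∑' j, |φ.1 (x (j + (m+1)))| ^ p) ^ (1/p)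
      ≤ (∑' j, |φ.1 (x (j + m))| ^ p) ^ (1/p) :=
        Real.rpow_le_rpow (tsum_nonneg fun j => Real.rpow_nonneg (abs_nonneg _) _)
          key (by positivity)
    _ ≤ weakNorm p fun j => x (j + m) := le_ciSup (bddAbove_tail hp1 x hsum m) φ

lemma weakNormFin_trunc_le (hp1 : 1 < p) (x : ℕ → E)
    (hsum : ∀ φ : E →L[ℝ] ℝ, Summable fun j => |φ (x j)| ^ p) (m m' : ℕ) :
    weakNormFin p (fun j => if j < m then 0 else x j) m'
      ≤ weakNorm p fun j => x (j + m) := by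
  have hp0 : (0:ℝ) < p := lt_trans one_pos hp1
  apply ciSup_le
  intro φ
  have hterm : ∀ j, |φ.1 (if j < m then 0 else x j)| ^ p
      = if j < m then 0 else |φ.1 (x j)| ^ p := by
    intro j; split_ifs <;> simp [Real.zero_rpow hp0.ne']
  have hsum1 : (∑ j ∈ Finset.range m', |φ.1 (if j < m then 0 else x j)| ^ p)
      ≤ ∑' j, |φ.1 (x (j + m))| ^ p := by
    simp_rw [hterm]
    rw [Finset.sum_ite, Finset.sum_const_zero, zero_add]
    have hflt : Finset.filter (fun j => ¬ j < m) (Finset.range m') = Finset.Ico m m' := by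
      ext j
      simp only [Finset.mem_filter, Finset.mem_range, Finset.mem_Ico, not_lt]
      omega
    rw [hflt, Finset.sum_Ico_eq_sum_range]
    have : ∀ j, |φ.1 (x (m + j))| ^ p = |φ.1 (x (j + m))| ^ p := by
      intro j; rw [add_comm]
    simp_rw [this]
    exact Summable.sum_le_tsum _ (fun j _ => Real.rpow_nonneg (abs_nonneg _) _)
      (summable_tail x hsum φ.1 m)
  calc (∑ j ∈ Finset.range m', |φ.1 (if j < m then 0 else x j)| ^ p) ^ (1/p)
      ≤ (∑' j, |φ.1 (x (j + m))| ^ p) ^ (1/p) :=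
        Real.rpow_le_rpow (Finset.sum_nonneg fun j _ =>
          Real.rpow_nonneg (abs_nonneg _) _) hsum1 (by positivity)
    _ ≤ _ := le_ciSup (bddAbove_tail hp1 x hsum m) φ

end AuxWeak2
theorem evAlmostSumming_of_finite_inequality (p : ℝ) (hp1 : 1 < p) (hp2 : p ≤ 2)
    {n : ℕ} {E : Fin n → Type*} [∀ i, NormedAddCommGroup (E i)]
    [∀ i, NormedSpace ℝ (E i)] [∀ i, CompleteSpace (E i)]
    {F : Type*} [NormedAddCommGroup F] [NormedSpace ℝ F] [CompleteSpace F]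
    (T : ContinuousMultilinearMap ℝ E F) (C : ℝ) (hC : 0 ≤ C)
    (h : ∀ (m : ℕ) (a : ∀ i, E i) (x : ∀ i, ℕ → E i),
      (∫ t in (0:ℝ)..1,
          ‖radSum (fun j => T (fun i => a i + x i j) - T a) m t‖ ^ 2) ^ ((1:ℝ)/2)
        ≤ C * ∏ i, (‖a i‖ + weakNormFin p (x i) m)) :
    EvAlmostSumming p T := by
  classical
  intro a x hx
  have hp0 : (0:ℝ) < p := lt_trans one_pos hp1
  have h' : ∀ (m : ℕ) (a' : ∀ i, E i) (x' : ∀ i, ℕ → E i),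
      ‖radLp (fun j => T (fun i => a' i + x' i j) - T a') m‖
        ≤ C * ∏ i, (‖a' i‖ + weakNormFin p (x' i) m) := by
    intro m a' x'; rw [norm_radLp]; exact h m a' x'
  set y : ℕ → F := fun j => T (fun i => a i + x i j) - T a with hy
  set τ : Fin n → ℕ → ℝ := fun i m => weakNorm p fun j => x i (j + m) with hτ
  have hτ0 : ∀ i m, 0 ≤ τ i m := fun i m => weakNorm_nonneg _ _
  have hτanti : ∀ i, Antitone (τ i) :=
    fun i => weakNorm_shift_antitone hp1 (x i) (hx i).1
  have hτtend : ∀ i, Filter.Tendsto (τ i) Filter.atTop (nhds 0) := fun i => (hx i).2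
  set K : ℝ := ∏ i, (‖a i‖ + τ i 0 + 1) with hK
  have hK1 : ∀ i : Fin n, (0:ℝ) ≤ ‖a i‖ + τ i 0 + 1 := fun i => by
    have := hτ0 i 0; have := norm_nonneg (a i); linarith
  have hK0 : 0 ≤ K := Finset.prod_nonneg fun i _ => hK1 i
  set A : Finset (Finset (Fin n)) := Finset.univ.erase Finset.univ with hA
  set ys : Finset (Fin n) → ℕ → F := fun s j => T (s.piecewise a fun i => x i j) with hys
  have hdec : ∀ j, y j = ∑ s ∈ A, ys s j := by
    intro j
    have hadd : (fun i => a i + x i j) = a + fun i => x i j := rfl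
    have h1 : T (fun i => a i + x i j)
        = ∑ s : Finset (Fin n), T (s.piecewise a fun i => x i j) := by
      rw [hadd]
      simpa using T.toMultilinearMap.map_add_univ a fun i => x i j
    have h2 : (∑ s : Finset (Fin n), T (s.piecewise a fun i => x i j))
        = T a + ∑ s ∈ A, ys s j := by
      rw [← Finset.add_sum_erase _ _ (Finset.mem_univ Finset.univ)]
      congr 1
      rw [Finset.piecewise_univ]
    simp only [hy, h1, h2]
    exact add_sub_cancel_left _ _
  have hper : ∀ N m m', N ≤ m → m ≤ m' → ∀ s ∈ A,
      ‖radLp (fun j => if j < m then 0 else ys s j) m'‖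
        ≤ C * (K * ∑ i, τ i N) := by
    intro N m m' hNm hmm' s hsA
    have hsne : s ≠ Finset.univ := Finset.ne_of_mem_erase hsA
    obtain ⟨i₀, hi₀⟩ : ∃ i, i ∉ s := by
      by_contra hc; push_neg at hc; exact hsne (Finset.eq_univ_iff_forall.2 hc)
    set a' : ∀ i, E i := fun i => if i ∈ s then a i else 0 with ha'
    set x' : ∀ i, ℕ → E i := fun i j => if i ∈ s then 0 else if j < m then 0 else x i j
      with hx'
    have hTa' : T a' = 0 := T.map_coord_zero i₀ (by simp [ha', hi₀])
    have hfun : ∀ j, T (fun i => a' i + x' i j) - T a'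
        = (if j < m then 0 else ys s j) := by
      intro j
      rw [hTa', sub_zero]
      by_cases hj : j < m
      · rw [if_pos hj]
        have he : (fun i => a' i + x' i j) = a' := by
          funext i; by_cases hi : i ∈ s <;> simp [ha', hx', hi, hj]
        rw [he, hTa']
      · rw [if_neg hj]
        have he : (fun i => a' i + x' i j) = s.piecewise a fun i => x i j := by
          funext i
          by_cases hi : i ∈ s <;>
            simp [ha', hx', hi, hj, Finset.piecewise_eq_of_mem,
              Finset.piecewise_eq_of_notMem]
        rw [he, hys]
    have heq : radLp (fun j => if j < m then 0 else ys s j) m'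
        = radLp (fun j => T (fun i => a' i + x' i j) - T a') m' :=
      radLp_congr _ _ _ fun j => (hfun j).symm
    rw [heq]
    refine le_trans (h' m' a' x') ?_
    have hfacnn : ∀ i, 0 ≤ ‖a' i‖ + weakNormFin p (x' i) m' := fun i =>
      add_nonneg (norm_nonneg _) (weakNormFin_nonneg _ _ _)
    have hfac_i0 : ‖a' i₀‖ + weakNormFin p (x' i₀) m' ≤ τ i₀ m := by
      have h1 : a' i₀ = 0 := by simp [ha', hi₀]
      have h2 : x' i₀ = fun j => if j < m then 0 else x i₀ j := by
        funext j; simp [hx', hi₀]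
      rw [h1, h2, norm_zero, zero_add]
      exact weakNormFin_trunc_le hp1 (x i₀) (hx i₀).1 m m'
    have hfac : ∀ i, ‖a' i‖ + weakNormFin p (x' i) m' ≤ ‖a i‖ + τ i 0 + 1 := by
      intro i
      by_cases hi : i ∈ s
      · have h1 : a' i = a i := by simp [ha', hi]
        have h2 : x' i = fun _ : ℕ => (0 : E i) := by funext j; simp [hx', hi]
        rw [h1, h2, weakNormFin_zero_seq hp0.ne']
        have := hτ0 i 0; linarith
      · have h1 : a' i = 0 := by simp [ha', hi]
        have h2 : x' i = fun j => if j < m then 0 else x i j := by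
          funext j; simp [hx', hi]
        rw [h1, h2, norm_zero, zero_add]
        have hc1 : weakNormFin p (fun j => if j < m then 0 else x i j) m' ≤ τ i m :=
          weakNormFin_trunc_le hp1 (x i) (hx i).1 m m'
        have hc2 : τ i m ≤ τ i 0 := hτanti i (Nat.zero_le m)
        have := norm_nonneg (a i); linarith
    have hprod : (∏ i, (‖a' i‖ + weakNormFin p (x' i) m')) ≤ K * ∑ i, τ i N := by
      rw [← Finset.prod_erase_mul Finset.univ _ (Finset.mem_univ i₀)]
      have hb1 : (∏ i ∈ Finset.univ.erase i₀, (‖a' i‖ + weakNormFin p (x' i) m')) ≤ K := by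
        calc (∏ i ∈ Finset.univ.erase i₀, (‖a' i‖ + weakNormFin p (x' i) m'))
            ≤ ∏ i ∈ Finset.univ.erase i₀, (‖a i‖ + τ i 0 + 1) :=
              Finset.prod_le_prod (fun i _ => hfacnn i) (fun i _ => hfac i)
          _ ≤ K := by
              rw [hK, ← Finset.prod_erase_mul Finset.univ _ (Finset.mem_univ i₀)]
              have h1 : (1:ℝ) ≤ ‖a i₀‖ + τ i₀ 0 + 1 := by
                have := hτ0 i₀ 0; have := norm_nonneg (a i₀); linarith
              exact le_mul_of_one_le_right
                (Finset.prod_nonneg fun i _ => hK1 i) h1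
      have hb2 : ‖a' i₀‖ + weakNormFin p (x' i₀) m' ≤ ∑ i, τ i N := by
        refine le_trans hfac_i0 (le_trans (hτanti i₀ hNm) ?_)
        exact Finset.single_le_sum (fun i _ => hτ0 i N) (Finset.mem_univ i₀)
      exact mul_le_mul hb1 hb2 (hfacnn i₀) hK0
    exact mul_le_mul_of_nonneg_left hprod hC
  have hdist : ∀ N m m', N ≤ m → m ≤ m' →
      dist (radLp y m) (radLp y m') ≤ (A.card : ℝ) * (C * (K * ∑ i, τ i N)) := by
    intro N m m' hNm hmm'
    have hd : dist (radLp y m) (radLp y m') = ‖radLp y m' - radLp y m‖ := by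
      rw [dist_comm, dist_eq_norm]
    rw [hd, radLp_sub_of_le y hmm']
    have hsplit : radLp (fun j => if j < m then 0 else y j) m'
        = ∑ s ∈ A, radLp (fun j => if j < m then 0 else ys s j) m' := by
      rw [← radLp_sum]
      apply radLp_congr
      intro j
      by_cases hj : j < m
      · simp [hj]
      · simp only [if_neg hj]; exact hdec j
    rw [hsplit]
    refine le_trans (norm_sum_le _ _) ?_
    calc ∑ s ∈ A, ‖radLp (fun j => if j < m then 0 else ys s j) m'‖
        ≤ ∑ _s ∈ A, C * (K * ∑ i, τ i N) :=
          Finset.sum_le_sum (hper N m m' hNm hmm')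
      _ = A.card * (C * (K * ∑ i, τ i N)) := by
          rw [Finset.sum_const, nsmul_eq_mul]
  set b : ℕ → ℝ := fun N => (A.card : ℝ) * (C * (K * ∑ i, τ i N)) with hb
  have hbtend : Filter.Tendsto b Filter.atTop (nhds 0) := by
    have h0 : Filter.Tendsto (fun N => ∑ i, τ i N) Filter.atTop (nhds 0) := by
      have := tendsto_finset_sum (Finset.univ : Finset (Fin n))
        (fun i _ => hτtend i)
      simpa using this
    have := (((h0.const_mul K).const_mul C).const_mul (A.card : ℝ))
    simpa [hb, mul_zero] using this
  have hcauchy : CauchySeq fun m => radLp y m := by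
    apply cauchySeq_of_le_tendsto_0 b _ hbtend
    intro m m' N hm hm'
    rcases le_total m m' with hle | hle
    · exact hdist N m m' hm hle
    · rw [dist_comm]; exact hdist N m' m hm' hle
  obtain ⟨G, hG⟩ := cauchySeq_tendsto_of_complete hcauchy
  refine ⟨fun t => G t, ?_⟩
  have hkey : ∀ m, (∫ t in (0:ℝ)..1, ‖radSum y m t - G t‖ ^ 2)
      = ‖radLp y m - G‖ ^ 2 := by
    intro m
    have hGm : MeasureTheory.MemLp (fun t => radSum y m t - G t) 2 radM :=
      (memLp_radSum y m).sub (MeasureTheory.Lp.memLp G)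
    have hInt : 0 ≤ ∫ t in (0:ℝ)..1, ‖radSum y m t - G t‖ ^ 2 :=
      intervalIntegral.integral_nonneg zero_le_one fun u _ => by positivity
    have hnormeq : ‖radLp y m - G‖
        = (∫ t in (0:ℝ)..1, ‖radSum y m t - G t‖ ^ 2) ^ ((1:ℝ)/2) := by
      rw [← norm_toLp_sq hGm]
      rw [MeasureTheory.Lp.norm_toLp _ hGm, MeasureTheory.Lp.norm_def]
      congr 1
      apply MeasureTheory.eLpNorm_congr_ae
      filter_upwards [MeasureTheory.Lp.coeFn_sub (radLp y m) G, coeFn_radLp y m]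
        with t h1 h2
      rw [h1, Pi.sub_apply, h2]
    rw [hnormeq,
      ← Real.rpow_natCast ((∫ t in (0:ℝ)..1, ‖radSum y m t - G t‖ ^ 2) ^ ((1:ℝ)/2)) 2,
      ← Real.rpow_mul hInt, show ((1:ℝ)/2) * ((2:ℕ):ℝ) = 1 by norm_num, Real.rpow_one]
  rw [show (fun m => ∫ t in (0:ℝ)..1, ‖radSum y m t - G t‖ ^ 2)
      = fun m => ‖radLp y m - G‖ ^ 2 from funext hkey]
  have hnorm : Filter.Tendsto (fun m => ‖radLp y m - G‖) Filter.atTop (nhds 0) :=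
    tendsto_iff_norm_sub_tendsto_zero.mp hG
  have := hnorm.pow 2
  simpa using this
end
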